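/- Let λ be a regular cardinal and λ ≥ μ with μ regular, κ a cardinal, and (f_β)_{β<κ} functions from λ to μ. Then there exists an ultrafilter D uniform over λ such that no f_β(D) is uniform over μ if and only if there exists a function g : κ → μ such that for every finite F ⊆ κ, the set ⋂_{β∈F} f_β⁻¹([0, g(β))) has cardinality λ. -/

import Mathlib

open Cardinal Set

/-- An ultrafilter over a cardinal `l` (realized as `l.ord.ToType`) is *uniform*
if every member has cardinality `l`. -/
def IsUniformUltrafilter (l : Cardinal) (D : Ultrafilter l.ord.ToType) : Prop :=
  ∀ s ∈ D, #s = l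

/-- There is an ultrafilter uniform over `λ` none of whose
pushforwards `f_β(D)` is uniform over `μ`, iff there is `g : κ → μ` such that
every finite intersection `⋂_{β ∈ F} f_β⁻¹ [0, g β)` has cardinality `λ`. -/
theorem stmt2 (l m : Cardinal) (hl : l.IsRegular) (hm : m.IsRegular) (hml : m ≤ l)
    {ι : Type*} (f : ι → l.ord.ToType → m.ord.ToType) :
    (∃ D : Ultrafilter l.ord.ToType, IsUniformUltrafilter l D ∧
        ∀ β : ι, ¬ (∀ t ∈ Ultrafilter.map (f β) D, #t = m)) ↔
      (∃ g : ι → m.ord.ToType, ∀ F : Finset ι,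
        #(↥(⋂ β ∈ F, f β ⁻¹' Set.Iio (g β))) = l) := by
  classical
  haveI : IsWellOrder m.ord.ToType (· < ·) := isWellOrder_lt
  have hmkl : #(l.ord.ToType) = l := by exact Cardinal.mk_ord_toType _
  have hmkm : #(m.ord.ToType) = m := by exact Cardinal.mk_ord_toType _
  constructor
  · rintro ⟨D, hDu, hD⟩
    have hb : ∀ β : ι, ∃ b : m.ord.ToType, f β ⁻¹' Set.Iio b ∈ D := by
      intro β
      have h1 := hD β
      push_neg at h1
      obtain ⟨t, htD, htm⟩ := h1
      have htlt : #t < m := lt_of_le_of_ne (le_of_le_of_eq (mk_set_le t) hmkm) htm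
      have h : #t < Ordinal.cof (Ordinal.type (α := m.ord.ToType) (· < ·)) := by
        rw [Ordinal.type_toType, hm.cof_eq]; exact htlt
      obtain ⟨b, hb⟩ := not_isCofinal_iff.1 (fun hc => (Order.cof_le hc).not_gt (by rwa [Ordinal.cof_type] at h))
      refine ⟨b, ?_⟩
      have hpre : f β ⁻¹' t ∈ D := (Ultrafilter.mem_map).1 htD
      exact D.toFilter.mem_of_superset hpre (Set.preimage_mono fun x hx => hb x hx)
    choose g hg using hb
    refine ⟨g, fun F => ?_⟩
    exact hDu _ ((Filter.biInter_finset_mem F).2 fun β _ => hg β)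
  · rintro ⟨g, hg⟩
    set A : Finset ι → Set l.ord.ToType := fun F => ⋂ β ∈ F, f β ⁻¹' Set.Iio (g β) with hA
    have hAmono : ∀ {F G : Finset ι}, F ⊆ G → A G ⊆ A F := by
      intro F G hFG x hx
      simp only [hA, Set.mem_iInter] at hx ⊢
      exact fun β hβ => hx β (hFG hβ)
    let C : Filter l.ord.ToType :=
      { sets := {s | #↥(sᶜ) < l}
        univ_sets := by
          simp only [Set.mem_setOf_eq, Set.compl_univ]
          exact lt_of_le_of_lt (le_of_eq (mk_eq_zero _)) hl.pos
        sets_of_superset := by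
          intro x y hx hxy
          exact lt_of_le_of_lt (mk_le_mk_of_subset (Set.compl_subset_compl.2 hxy)) hx
        inter_sets := by
          intro x y hx hy
          simp only [Set.mem_setOf_eq, Set.compl_inter] at *
          exact lt_of_le_of_lt (mk_union_le _ _) (Cardinal.add_lt_of_lt hl.aleph0_le hx hy) }
    have hCmem : ∀ {s : Set l.ord.ToType}, #↥(sᶜ) < l → s ∈ C := fun h => h
    let B : Filter l.ord.ToType := ⨅ F : Finset ι, Filter.principal (A F)
    have hdir : Directed (· ≥ ·) fun F : Finset ι => Filter.principal (A F) := by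
      intro F G
      exact ⟨F ∪ G, Filter.principal_mono.2 (hAmono Finset.subset_union_left),
        Filter.principal_mono.2 (hAmono Finset.subset_union_right)⟩
    have hmemB : ∀ s, s ∈ B ↔ ∃ F, A F ⊆ s := by
      intro s
      rw [Filter.mem_iInf_of_directed hdir]
      simp [Filter.mem_principal]
    have hinter : ∀ (s : Set l.ord.ToType), #↥(sᶜ) < l → ∀ F : Finset ι,
        (s ∩ A F).Nonempty := by
      intro s hs F
      rw [Set.nonempty_iff_ne_empty]
      intro hempty
      have hsub : A F ⊆ sᶜ := by
        intro x hx
        intro hxs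
        exact absurd (Set.eq_empty_iff_forall_notMem.1 hempty x ⟨hxs, hx⟩) (fun h => h)
      have h2 : l ≤ #↥(sᶜ) := by
        have h3 := mk_le_mk_of_subset hsub
        rwa [hg F] at h3
      exact absurd (lt_of_le_of_lt h2 hs) (lt_irrefl l)
    haveI : Filter.NeBot (C ⊓ B) := by
      rw [Filter.inf_neBot_iff]
      intro s hs t ht
      obtain ⟨F, hF⟩ := (hmemB t).1 ht
      obtain ⟨x, hx1, hx2⟩ := hinter s hs F
      exact ⟨x, hx1, hF hx2⟩
    obtain ⟨D, hD⟩ := Ultrafilter.exists_le (C ⊓ B)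
    have hDC : ∀ s ∈ C, s ∈ D := fun s hs => hD (Filter.mem_inf_of_left hs)
    have hDB : ∀ s ∈ B, s ∈ D := fun s hs => hD (Filter.mem_inf_of_right hs)
    refine ⟨D, ?_, ?_⟩
    · intro s hs
      refine le_antisymm (le_of_le_of_eq (mk_set_le s) hmkl) ?_
      by_contra hlt
      push_neg at hlt
      have : sᶜ ∈ D := hDC _ (hCmem (by rwa [compl_compl]))
      exact (Ultrafilter.compl_notMem_iff.2 hs) this
    · intro β hall
      have hmem : A {β} ∈ D := hDB _ ((hmemB _).2 ⟨{β}, subset_rfl⟩)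
      have hpre : f β ⁻¹' Set.Iio (g β) ∈ D := by
        refine D.toFilter.mem_of_superset hmem ?_
        intro x hx
        simp only [hA, Set.mem_iInter, Finset.mem_singleton] at hx
        exact hx β rfl
      have := hall (Set.Iio (g β)) (Ultrafilter.mem_map.2 hpre)
      exact absurd this (Cardinal.mk_Iio_ord_toType (g β)).ne
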